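/- The function u(t) = sin(1/(2 + sin t + sin(π t))) is almost automorphic on ℝ: every real sequence {s'_n} has a subsequence {s_n} such that for some function v : ℝ → ℝ, u(t + s_n) → v(t) and v(t − s_n) → u(t) for each t ∈ ℝ. -/

import Mathlib

open Filter Topology

lemma pi_mul_int (p q : ℤ) (h : Real.pi * p = q) : p = 0 := by
  by_contra hp
  have hp' : (p : ℝ) ≠ 0 := Int.cast_ne_zero.mpr hp
  exact irrational_pi ⟨(q : ℚ) / (p : ℚ), by push_cast; field_simp; linarith⟩

lemma sin_eq_neg_one' {x : ℝ} (h : Real.sin x = -1) :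
    ∃ k : ℤ, x = -(Real.pi / 2) + k * (2 * Real.pi) := by
  have h1 : Real.cos (x + Real.pi / 2) = 1 := by
    rw [Real.cos_add, Real.cos_pi_div_two, Real.sin_pi_div_two]
    simp [h]
  obtain ⟨n, hn⟩ := (Real.cos_eq_one_iff _).1 h1
  exact ⟨n, by linarith⟩

lemma sum_pos' (t : ℝ) : 0 < 2 + Real.sin t + Real.sin (Real.pi * t) := by
  have h1 := Real.neg_one_le_sin t
  have h2 := Real.neg_one_le_sin (Real.pi * t)
  rcases lt_or_eq_of_le (show (0:ℝ) ≤ 2 + Real.sin t + Real.sin (Real.pi * t) by linarith) with h | h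
  · exact h
  exfalso
  have hs1 : Real.sin t = -1 := by linarith [Real.sin_le_one (Real.pi * t)]
  have hs2 : Real.sin (Real.pi * t) = -1 := by linarith [Real.sin_le_one t]
  obtain ⟨k, hk⟩ := sin_eq_neg_one' hs1
  obtain ⟨m, hm⟩ := sin_eq_neg_one' hs2
  have hpi := Real.pi_pos
  have ht : t = -(1/2 : ℝ) + m * 2 := by
    have h0 : Real.pi * t = Real.pi * (-(1/2 : ℝ) + m * 2) := by rw [hm]; ring
    exact mul_left_cancel₀ (ne_of_gt hpi) h0
  have key : Real.pi * ((4 * k - 1 : ℤ) : ℝ) = ((4 * m - 1 : ℤ) : ℝ) := by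
    push_cast
    rw [ht] at hk
    linear_combination -2 * hk
  have := pi_mul_int _ _ key
  omega

lemma zero_unique' {a b x y : ℝ} (hx1 : Real.sin (x + a) = -1)
    (hx2 : Real.sin (Real.pi * x + b) = -1) (hy1 : Real.sin (y + a) = -1)
    (hy2 : Real.sin (Real.pi * y + b) = -1) : x = y := by
  obtain ⟨k, hk⟩ := sin_eq_neg_one' hx1
  obtain ⟨k', hk'⟩ := sin_eq_neg_one' hy1
  obtain ⟨m, hm⟩ := sin_eq_neg_one' hx2
  obtain ⟨m', hm'⟩ := sin_eq_neg_one' hy2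
  have h2pi : (2 * Real.pi) ≠ 0 := by positivity
  have h1 : (Real.pi * (((k : ℝ)) - k')) * (2 * Real.pi) = (((m : ℝ)) - m') * (2 * Real.pi) := by
    linear_combination -Real.pi * hk + Real.pi * hk' + hm - hm'
  have key : Real.pi * ((k - k' : ℤ) : ℝ) = ((m - m' : ℤ) : ℝ) := by
    push_cast
    exact mul_right_cancel₀ h2pi h1
  have hkk := pi_mul_int _ _ key
  have hcast : (k : ℝ) = (k' : ℝ) := by exact_mod_cast congrArg (fun z : ℤ => (z : ℝ)) (by omega : k = k')
  rw [hcast] at hk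
  linarith

lemma exists_angle' (p q : ℝ) (hpq : p ^ 2 + q ^ 2 = 1) :
    ∃ a : ℝ, Real.cos a = p ∧ Real.sin a = q := by
  have hz : (⟨p, q⟩ : ℂ) ≠ 0 := by
    intro h
    rw [Complex.ext_iff] at h
    simp only [Complex.zero_re, Complex.zero_im] at h
    rw [h.1, h.2] at hpq
    norm_num at hpq
  have habs : ‖(⟨p, q⟩ : ℂ)‖ = 1 := by
    rw [Complex.norm_def, Complex.normSq_mk, show p * p + q * q = 1 by nlinarith]
    exact Real.sqrt_one
  refine ⟨Complex.arg ⟨p, q⟩, ?_, ?_⟩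
  · rw [Complex.cos_arg hz, habs]; simp
  · rw [Complex.sin_arg, habs]; simp

/-- the function `u(t) = sin(1/(2 + sin t + sin πt))` is almost
automorphic in Bochner's sense. -/
theorem stmt19 :
    ∀ s' : ℕ → ℝ, ∃ φ : ℕ → ℕ, StrictMono φ ∧ ∃ v : ℝ → ℝ,
      (∀ t : ℝ, Tendsto
        (fun n => Real.sin (1 / (2 + Real.sin (t + s' (φ n)) +
          Real.sin (Real.pi * (t + s' (φ n)))))) atTop (𝓝 (v t))) ∧
      (∀ t : ℝ, Tendsto (fun n => v (t - s' (φ n))) atTop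
        (𝓝 (Real.sin (1 / (2 + Real.sin t + Real.sin (Real.pi * t)))))) := by
  classical
  intro s'
  -- Step 1: extract a subsequence along which the four trig sequences converge.
  have hK : IsCompact ((Set.Icc (-1:ℝ) 1) ×ˢ ((Set.Icc (-1:ℝ) 1) ×ˢ
      ((Set.Icc (-1:ℝ) 1) ×ˢ (Set.Icc (-1:ℝ) 1)))) :=
    isCompact_Icc.prod (isCompact_Icc.prod (isCompact_Icc.prod isCompact_Icc))
  obtain ⟨c, -, φ1, hφ1, hc⟩ := hK.tendsto_subseq
    (x := fun n => (Real.cos (s' n), Real.sin (s' n),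
      Real.cos (Real.pi * s' n), Real.sin (Real.pi * s' n)))
    (fun n => by
      simp only [Set.mem_prod, Set.mem_Icc]
      exact ⟨⟨Real.neg_one_le_cos _, Real.cos_le_one _⟩,
        ⟨Real.neg_one_le_sin _, Real.sin_le_one _⟩,
        ⟨Real.neg_one_le_cos _, Real.cos_le_one _⟩,
        ⟨Real.neg_one_le_sin _, Real.sin_le_one _⟩⟩)
  obtain ⟨c1, c2, c3, c4⟩ := c
  have h1 : Tendsto (fun n => Real.cos (s' (φ1 n))) atTop (𝓝 c1) :=
    (continuous_fst.tendsto _).comp hc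
  have h2 : Tendsto (fun n => Real.sin (s' (φ1 n))) atTop (𝓝 c2) :=
    ((continuous_fst.comp continuous_snd).tendsto _).comp hc
  have h3 : Tendsto (fun n => Real.cos (Real.pi * s' (φ1 n))) atTop (𝓝 c3) :=
    ((continuous_fst.comp (continuous_snd.comp continuous_snd)).tendsto _).comp hc
  have h4 : Tendsto (fun n => Real.sin (Real.pi * s' (φ1 n))) atTop (𝓝 c4) :=
    ((continuous_snd.comp (continuous_snd.comp continuous_snd)).tendsto _).comp hc
  have hsq12 : c1 ^ 2 + c2 ^ 2 = 1 := by
    have hA : Tendsto (fun n => Real.cos (s' (φ1 n)) ^ 2 + Real.sin (s' (φ1 n)) ^ 2)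
        atTop (𝓝 (c1 ^ 2 + c2 ^ 2)) := (h1.pow 2).add (h2.pow 2)
    have hB : Tendsto (fun _ : ℕ => (1:ℝ)) atTop (𝓝 (c1 ^ 2 + c2 ^ 2)) := by
      simpa [Real.cos_sq_add_sin_sq] using hA
    exact tendsto_nhds_unique hB tendsto_const_nhds
  have hsq34 : c3 ^ 2 + c4 ^ 2 = 1 := by
    have hA : Tendsto (fun n => Real.cos (Real.pi * s' (φ1 n)) ^ 2 +
        Real.sin (Real.pi * s' (φ1 n)) ^ 2) atTop (𝓝 (c3 ^ 2 + c4 ^ 2)) :=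
      (h3.pow 2).add (h4.pow 2)
    have hB : Tendsto (fun _ : ℕ => (1:ℝ)) atTop (𝓝 (c3 ^ 2 + c4 ^ 2)) := by
      simpa [Real.cos_sq_add_sin_sq] using hA
    exact tendsto_nhds_unique hB tendsto_const_nhds
  obtain ⟨a, ha1, ha2⟩ := exists_angle' c1 c2 hsq12
  obtain ⟨b, hb1, hb2⟩ := exists_angle' c3 c4 hsq34
  set D : ℝ → ℝ := fun x => 2 + Real.sin (x + a) + Real.sin (Real.pi * x + b) with hD
  have hDuniq : ∀ x y, D x = 0 → D y = 0 → x = y := by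
    intro x y hx hy
    simp only [hD] at hx hy
    have bx1 := Real.neg_one_le_sin (x + a)
    have bx2 := Real.neg_one_le_sin (Real.pi * x + b)
    have by1 := Real.neg_one_le_sin (y + a)
    have by2 := Real.neg_one_le_sin (Real.pi * y + b)
    exact zero_unique' (by linarith) (by linarith) (by linarith) (by linarith)
  obtain ⟨t0, ht0⟩ : ∃ t0 : ℝ, ∀ t, t ≠ t0 → D t ≠ 0 := by
    by_cases hzero : ∃ x, D x = 0
    · obtain ⟨x0, hx0⟩ := hzero
      exact ⟨x0, fun t ht hDt => ht (hDuniq t x0 hDt hx0)⟩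
    · exact ⟨0, fun t _ hDt => hzero ⟨t, hDt⟩⟩
  -- Step 2: extract further so that the sequence converges at t0.
  obtain ⟨L, -, ψ, hψ, hL⟩ := (isCompact_Icc (a := (-1:ℝ)) (b := 1)).tendsto_subseq
    (x := fun n => Real.sin (1 / (2 + Real.sin (t0 + s' (φ1 n)) +
      Real.sin (Real.pi * (t0 + s' (φ1 n))))))
    (fun n => ⟨Real.neg_one_le_sin _, Real.sin_le_one _⟩)
  set φ : ℕ → ℕ := φ1 ∘ ψ with hφ
  have hc1 : Tendsto (fun n => Real.cos (s' (φ n))) atTop (𝓝 c1) :=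
    h1.comp hψ.tendsto_atTop
  have hc2 : Tendsto (fun n => Real.sin (s' (φ n))) atTop (𝓝 c2) :=
    h2.comp hψ.tendsto_atTop
  have hc3 : Tendsto (fun n => Real.cos (Real.pi * s' (φ n))) atTop (𝓝 c3) :=
    h3.comp hψ.tendsto_atTop
  have hc4 : Tendsto (fun n => Real.sin (Real.pi * s' (φ n))) atTop (𝓝 c4) :=
    h4.comp hψ.tendsto_atTop
  -- denominator convergence, forward
  have hden : ∀ t : ℝ, Tendsto (fun n => 2 + Real.sin (t + s' (φ n)) +
      Real.sin (Real.pi * (t + s' (φ n)))) atTop (𝓝 (D t)) := by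
    intro t
    have hlim : Tendsto (fun n => 2 + (Real.sin t * Real.cos (s' (φ n)) +
        Real.cos t * Real.sin (s' (φ n))) + (Real.sin (Real.pi * t) * Real.cos (Real.pi * s' (φ n)) +
        Real.cos (Real.pi * t) * Real.sin (Real.pi * s' (φ n)))) atTop
        (𝓝 (2 + (Real.sin t * c1 + Real.cos t * c2) +
          (Real.sin (Real.pi * t) * c3 + Real.cos (Real.pi * t) * c4))) :=
      (tendsto_const_nhds.add ((tendsto_const_nhds.mul hc1).add
        (tendsto_const_nhds.mul hc2))).add
        ((tendsto_const_nhds.mul hc3).add (tendsto_const_nhds.mul hc4))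
    have hfun : (fun n => 2 + Real.sin (t + s' (φ n)) + Real.sin (Real.pi * (t + s' (φ n)))) =
        fun n => 2 + (Real.sin t * Real.cos (s' (φ n)) + Real.cos t * Real.sin (s' (φ n))) +
          (Real.sin (Real.pi * t) * Real.cos (Real.pi * s' (φ n)) +
            Real.cos (Real.pi * t) * Real.sin (Real.pi * s' (φ n))) := by
      funext n
      rw [mul_add, Real.sin_add, Real.sin_add]
    have hpt : D t = 2 + (Real.sin t * c1 + Real.cos t * c2) +
        (Real.sin (Real.pi * t) * c3 + Real.cos (Real.pi * t) * c4) := by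
      simp only [hD]
      rw [Real.sin_add, Real.sin_add, ha1, ha2, hb1, hb2]
    rw [hfun, hpt]
    exact hlim
  -- denominator convergence, backward
  have hback : ∀ t : ℝ, Tendsto (fun n => D (t - s' (φ n))) atTop
      (𝓝 (2 + Real.sin t + Real.sin (Real.pi * t))) := by
    intro t
    have hlim : Tendsto (fun n => 2 + (Real.sin (t + a) * Real.cos (s' (φ n)) -
        Real.cos (t + a) * Real.sin (s' (φ n))) +
        (Real.sin (Real.pi * t + b) * Real.cos (Real.pi * s' (φ n)) -
          Real.cos (Real.pi * t + b) * Real.sin (Real.pi * s' (φ n)))) atTop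
        (𝓝 (2 + (Real.sin (t + a) * c1 - Real.cos (t + a) * c2) +
          (Real.sin (Real.pi * t + b) * c3 - Real.cos (Real.pi * t + b) * c4))) :=
      (tendsto_const_nhds.add ((tendsto_const_nhds.mul hc1).sub
        (tendsto_const_nhds.mul hc2))).add
        ((tendsto_const_nhds.mul hc3).sub (tendsto_const_nhds.mul hc4))
    have hfun : (fun n => D (t - s' (φ n))) =
        fun n => 2 + (Real.sin (t + a) * Real.cos (s' (φ n)) -
          Real.cos (t + a) * Real.sin (s' (φ n))) +
          (Real.sin (Real.pi * t + b) * Real.cos (Real.pi * s' (φ n)) -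
            Real.cos (Real.pi * t + b) * Real.sin (Real.pi * s' (φ n))) := by
      funext n
      simp only [hD]
      rw [show t - s' (φ n) + a = (t + a) - s' (φ n) by ring,
        show Real.pi * (t - s' (φ n)) + b = (Real.pi * t + b) - Real.pi * s' (φ n) by ring,
        Real.sin_sub, Real.sin_sub]
    have hpt : 2 + Real.sin t + Real.sin (Real.pi * t) =
        2 + (Real.sin (t + a) * c1 - Real.cos (t + a) * c2) +
          (Real.sin (Real.pi * t + b) * c3 - Real.cos (Real.pi * t + b) * c4) := by
      rw [← ha1, ← ha2, ← hb1, ← hb2, ← Real.sin_sub, ← Real.sin_sub,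
        add_sub_cancel_right, add_sub_cancel_right]
    rw [hfun, hpt]
    exact hlim
  have hcont : ∀ x : ℝ, x ≠ 0 → ContinuousAt (fun y : ℝ => Real.sin (1 / y)) x := by
    intro x hx
    exact Real.continuous_sin.continuousAt.comp (continuousAt_const.div continuousAt_id hx)
  -- forward convergence
  have hfwd : ∀ t : ℝ, Tendsto (fun n => Real.sin (1 / (2 + Real.sin (t + s' (φ n)) +
      Real.sin (Real.pi * (t + s' (φ n)))))) atTop
      (𝓝 (if t = t0 then L else Real.sin (1 / D t))) := by
    intro t
    by_cases ht : t = t0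
    · subst ht
      rw [if_pos rfl]
      exact hL
    · rw [if_neg ht]
      exact ((hcont (D t) (ht0 t ht)).tendsto).comp (hden t)
  refine ⟨φ, hφ1.comp hψ, fun x => if x = t0 then L else Real.sin (1 / D x), hfwd, ?_⟩
  -- backward convergence
  intro t
  by_cases hf : ∃ᶠ n in atTop, s' (φ n) = t - t0
  · have e1 : c1 = Real.cos (t - t0) :=
      tendsto_nhds_unique_of_frequently_eq hc1 tendsto_const_nhds
        (hf.mono fun n hn => by rw [hn])
    have e2 : c2 = Real.sin (t - t0) :=
      tendsto_nhds_unique_of_frequently_eq hc2 tendsto_const_nhds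
        (hf.mono fun n hn => by rw [hn])
    have e3 : c3 = Real.cos (Real.pi * (t - t0)) :=
      tendsto_nhds_unique_of_frequently_eq hc3 tendsto_const_nhds
        (hf.mono fun n hn => by rw [hn])
    have e4 : c4 = Real.sin (Real.pi * (t - t0)) :=
      tendsto_nhds_unique_of_frequently_eq hc4 tendsto_const_nhds
        (hf.mono fun n hn => by rw [hn])
    have hDall : ∀ x, 0 < D x := by
      intro x
      have hx : D x = 2 + Real.sin (x + (t - t0)) + Real.sin (Real.pi * (x + (t - t0))) := by
        simp only [hD]
        rw [show Real.pi * (x + (t - t0)) = Real.pi * x + Real.pi * (t - t0) by ring,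
          Real.sin_add x (t - t0), Real.sin_add (Real.pi * x) (Real.pi * (t - t0)),
          Real.sin_add x a, Real.sin_add (Real.pi * x) b, ha1, ha2, hb1, hb2, e1, e2, e3, e4]
      rw [hx]
      exact sum_pos' _
    have hLeq : L = Real.sin (1 / D t0) := by
      have hA : Tendsto (fun n => Real.sin (1 / (2 + Real.sin (t0 + s' (φ n)) +
          Real.sin (Real.pi * (t0 + s' (φ n)))))) atTop (𝓝 L) := by
        simpa using hfwd t0
      have hB : Tendsto (fun n => Real.sin (1 / (2 + Real.sin (t0 + s' (φ n)) +
          Real.sin (Real.pi * (t0 + s' (φ n)))))) atTop (𝓝 (Real.sin (1 / D t0))) :=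
        ((hcont (D t0) (ne_of_gt (hDall t0))).tendsto).comp (hden t0)
      exact tendsto_nhds_unique hA hB
    have hveq : (fun x => if x = t0 then L else Real.sin (1 / D x)) =
        fun x => Real.sin (1 / D x) := by
      funext x
      split_ifs with h
      · rw [h, hLeq]
      · rfl
    rw [hveq]
    exact ((hcont _ (ne_of_gt (sum_pos' t))).tendsto).comp (hback t)
  · rw [Filter.not_frequently] at hf
    have hev : (fun n => Real.sin (1 / D (t - s' (φ n)))) =ᶠ[atTop]
        fun n => if t - s' (φ n) = t0 then L else Real.sin (1 / D (t - s' (φ n))) := by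
      filter_upwards [hf] with n hn
      rw [if_neg fun h => hn (by linarith)]
    have hB : Tendsto (fun n => Real.sin (1 / D (t - s' (φ n)))) atTop
        (𝓝 (Real.sin (1 / (2 + Real.sin t + Real.sin (Real.pi * t))))) :=
      ((hcont _ (ne_of_gt (sum_pos' t))).tendsto).comp (hback t)
    exact hB.congr' hev
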